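/- arXiv:2108.07691 — 3 statements merged into one kernel-verified Lean document; each statement's English description precedes it below -/
import Mathlib

section
/- Let ε = diag(ε₁, ε₂, ε₃) and μ = diag(μ₁, μ₂, μ₃) be positive diagonal 3×3 matrices and ξ = (ξ₀, ξ') ∈ ℝ × ℝ³. Then det(-ξ₀² I₃ - C(ξ') μ⁻¹ C(ξ') ε⁻¹) = -ξ₀² (ξ₀⁴ - ξ₀² q₀(ξ') + q₁(ξ')), where q₀(ξ') = ξ₁²(1/(ε₂μ₃) + 1/(μ₂ε₃)) + ξ₂²(1/(ε₁μ₃) + 1/(ε₃μ₁)) + ξ₃²(1/(ε₂μ₁) + 1/(ε₁μ₂)) and q₁(ξ') = (ε₁ε₂ε₃μ₁μ₂μ₃)⁻¹ (ε₁ξ₁² + ε₂ξ₂² + ε₃ξ₃²)(μ₁ξ₁² + μ₂ξ₂² + μ₃ξ₃²). -/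
set_option maxHeartbeats 1000000

lemma vecHead_vecTail_zero :
    Matrix.vecHead (Matrix.vecTail fun _ : Fin 3 => (0 : ℝ)) = 0 := rfl

lemma vecHead_vecTail_zero' :
    Matrix.vecHead (Matrix.vecTail fun _ : Fin 2 => (0 : ℝ)) = 0 := rfl

/-- The curl matrix `C(ξ')` with `C(ξ') v = ξ' × v`. -/
def curlMatrix (ξ : Fin 3 → ℝ) : Matrix (Fin 3) (Fin 3) ℝ :=
  !![0, -ξ 2, ξ 1; ξ 2, 0, -ξ 0; -ξ 1, ξ 0, 0]

theorem fresnel_polynomial (e m : Fin 3 → ℝ) (he : ∀ i, 0 < e i) (hm : ∀ i, 0 < m i)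
    (ξ₀ : ℝ) (ξ' : Fin 3 → ℝ) :
    (-(ξ₀ ^ 2) • (1 : Matrix (Fin 3) (Fin 3) ℝ)
        - curlMatrix ξ' * Matrix.diagonal (fun i => (m i)⁻¹)
          * curlMatrix ξ' * Matrix.diagonal (fun i => (e i)⁻¹)).det
      = -(ξ₀ ^ 2) * (ξ₀ ^ 4
          - ξ₀ ^ 2 * (ξ' 0 ^ 2 * (1 / (e 1 * m 2) + 1 / (m 1 * e 2))
              + ξ' 1 ^ 2 * (1 / (e 0 * m 2) + 1 / (e 2 * m 0))
              + ξ' 2 ^ 2 * (1 / (e 1 * m 0) + 1 / (e 0 * m 1)))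
          + (e 0 * e 1 * e 2 * m 0 * m 1 * m 2)⁻¹
            * (e 0 * ξ' 0 ^ 2 + e 1 * ξ' 1 ^ 2 + e 2 * ξ' 2 ^ 2)
            * (m 0 * ξ' 0 ^ 2 + m 1 * ξ' 1 ^ 2 + m 2 * ξ' 2 ^ 2)) := by
  have he0 := (he 0).ne'
  have he1 := (he 1).ne'
  have he2 := (he 2).ne'
  have hm0 := (hm 0).ne'
  have hm1 := (hm 1).ne'
  have hm2 := (hm 2).ne'
  have hdm : (Matrix.diagonal fun i => (m i)⁻¹)
      = !![(m 0)⁻¹, 0, 0; 0, (m 1)⁻¹, 0; 0, 0, (m 2)⁻¹] := by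
    ext i j
    fin_cases i <;> fin_cases j <;> simp [Matrix.diagonal, Matrix.vecHead, Matrix.vecTail]
  have hde : (Matrix.diagonal fun i => (e i)⁻¹)
      = !![(e 0)⁻¹, 0, 0; 0, (e 1)⁻¹, 0; 0, 0, (e 2)⁻¹] := by
    ext i j
    fin_cases i <;> fin_cases j <;> simp [Matrix.diagonal, Matrix.vecHead, Matrix.vecTail]
  rw [hdm, hde, curlMatrix, Matrix.mul_fin_three, Matrix.mul_fin_three,
    Matrix.mul_fin_three, Matrix.one_fin_three, Matrix.det_fin_three]
  simp only [Matrix.sub_apply, Matrix.smul_apply, smul_eq_mul,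
    Matrix.cons_val', Matrix.cons_val_zero, Matrix.cons_val_one, Matrix.cons_val_two, Matrix.head_cons,
    Matrix.empty_val', Matrix.cons_val_fin_one, Matrix.head_fin_const, Matrix.of_apply,
    Matrix.vecHead, Matrix.vecTail, Function.comp, vecHead_vecTail_zero, vecHead_vecTail_zero']
  norm_num [Matrix.vecHead, Matrix.vecTail]
  field_simp
  ring
end

section
/- Let a, b > 0, ξ' ∈ ℝ³ with ξ' ≠ 0, and set ‖ξ'‖_ε = √(b ξ₁² + a ξ₂² + a ξ₃²). Consider the 6×6 matrix p(ξ)/i = [[ξ₀ I₃, -C(ξ')], [C(ξ') diag(a,b,b), ξ₀ I₃]]. Then the vector v = (0, -ξ₃/(√b‖ξ'‖), ξ₂/(√b‖ξ'‖), -(ξ₂²+ξ₃²)/‖ξ'‖², ξ₁ξ₂/‖ξ'‖², ξ₁ξ₃/‖ξ'‖²) ∈ ℝ⁶ satisfies (p(ξ)/i) v = (ξ₀ - √b ‖ξ'‖) v. -/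
set_option maxHeartbeats 1000000


theorem partially_anisotropic_eigenvector_ordinary (a b ξ₀ : ℝ) (ha : 0 < a)
    (hb : 0 < b) (ξ' : Fin 3 → ℝ) (hξ : ξ' ≠ 0) :
    let n := Real.sqrt (ξ' 0 ^ 2 + ξ' 1 ^ 2 + ξ' 2 ^ 2)
    let p := Matrix.fromBlocks
      (ξ₀ • (1 : Matrix (Fin 3) (Fin 3) ℝ)) (-curlMatrix ξ')
      (curlMatrix ξ' * Matrix.diagonal ![a, b, b])
      (ξ₀ • (1 : Matrix (Fin 3) (Fin 3) ℝ))
    let v : Fin 3 ⊕ Fin 3 → ℝ := Sum.elim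
      ![0, -(ξ' 2) / (Real.sqrt b * n), ξ' 1 / (Real.sqrt b * n)]
      ![-(ξ' 1 ^ 2 + ξ' 2 ^ 2) / n ^ 2, ξ' 0 * ξ' 1 / n ^ 2, ξ' 0 * ξ' 2 / n ^ 2]
    p.mulVec v = (ξ₀ - Real.sqrt b * n) • v := by
  intro n p v
  have hsum : 0 < ξ' 0 ^ 2 + ξ' 1 ^ 2 + ξ' 2 ^ 2 := by
    rcases (Function.ne_iff.mp hξ) with ⟨i, hi⟩
    fin_cases i <;> simp only [Pi.zero_apply] at hi
    · have h0 : ξ' 0 ≠ 0 := hi; positivity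
    · have h1 : ξ' 1 ≠ 0 := hi; positivity
    · have h2 : ξ' 2 ≠ 0 := hi; positivity
  have hn : 0 < n := Real.sqrt_pos.mpr hsum
  have hn2 : n ^ 2 = ξ' 0 ^ 2 + ξ' 1 ^ 2 + ξ' 2 ^ 2 := Real.sq_sqrt hsum.le
  have hs : 0 < Real.sqrt b := Real.sqrt_pos.mpr hb
  have hs2 : Real.sqrt b ^ 2 = b := Real.sq_sqrt hb.le
  have hn2' : Real.sqrt (ξ' 0 ^ 2 + ξ' 1 ^ 2 + ξ' 2 ^ 2) ^ 2
      = ξ' 0 ^ 2 + ξ' 1 ^ 2 + ξ' 2 ^ 2 := Real.sq_sqrt hsum.le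
  have hbn : Real.sqrt b ^ 2 * Real.sqrt (ξ' 0 ^ 2 + ξ' 1 ^ 2 + ξ' 2 ^ 2) ^ 2
      = b * (ξ' 0 ^ 2 + ξ' 1 ^ 2 + ξ' 2 ^ 2) := by rw [hs2, hn2']
  funext x
  rcases x with i | i <;> fin_cases i <;>
    simp [p, v, n, Matrix.mulVec, Matrix.fromBlocks, dotProduct,
      Fin.sum_univ_three, curlMatrix, Matrix.one_apply, Matrix.vecMul_diagonal,
      Matrix.vecMul] <;>
    field_simp
  all_goals {
    generalize hNg : Real.sqrt (ξ' 0 ^ 2 + ξ' 1 ^ 2 + ξ' 2 ^ 2) = N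
    generalize hSg : Real.sqrt b = S
    have hbn' : S ^ 2 * N ^ 2 = b * (ξ' 0 ^ 2 + ξ' 1 ^ 2 + ξ' 2 ^ 2) := by
      rw [← hSg, ← hNg]; exact hbn
    have hNq : N ^ 2 = ξ' 0 ^ 2 + ξ' 1 ^ 2 + ξ' 2 ^ 2 := by rw [← hNg]; exact hn2'
    have hSq : S ^ 2 = b := by rw [← hSg]; exact hs2
    first
    | ring1
    | linear_combination (-((ξ' 1 ^ 2 + ξ' 2 ^ 2) * (ξ' 0 ^ 2 + ξ' 1 ^ 2 + ξ' 2 ^ 2))) * hbn'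
    | linear_combination ((ξ' 1 ^ 2 + ξ' 2 ^ 2) * (ξ' 0 ^ 2 + ξ' 1 ^ 2 + ξ' 2 ^ 2)) * hbn'
    | linear_combination ((ξ' 0 ^ 2 + ξ' 1 ^ 2 + ξ' 2 ^ 2) * ξ' 0 * ξ' 1) * hbn'
    | linear_combination (-((ξ' 0 ^ 2 + ξ' 1 ^ 2 + ξ' 2 ^ 2) * ξ' 0 * ξ' 1)) * hbn'
    | linear_combination ((ξ' 0 ^ 2 + ξ' 1 ^ 2 + ξ' 2 ^ 2) * ξ' 0 * ξ' 2) * hbn'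
    | linear_combination (-((ξ' 0 ^ 2 + ξ' 1 ^ 2 + ξ' 2 ^ 2) * ξ' 0 * ξ' 2)) * hbn'
    | linear_combination (-(ξ' 2 * S)) * hNq
    | linear_combination (ξ' 1 * S) * hNq
    | linear_combination (-(N * (ξ' 1 ^ 2 + ξ' 2 ^ 2))) * hSq
    | linear_combination (ξ' 0 * ξ' 1 * N) * hSq
    | linear_combination (ξ' 0 * ξ' 2 * N) * hSq }
end

section
/- Let a, b > 0 and ξ' ∈ ℝ³ with ξ' ≠ 0. Set ‖ξ'‖_ε = √(bξ₁² + aξ₂² + aξ₃²), ξ̃ᵢ = ξᵢ/‖ξ'‖_ε, and p(ξ)/i = [[ξ₀ I₃, -C(ξ')], [C(ξ') diag(a,b,b), ξ₀ I₃]]. Then v = (ξ̃₂² + ξ̃₃², -ξ̃₁ξ̃₂, -ξ̃₁ξ̃₃, 0, -ξ̃₃, ξ̃₂) ∈ ℝ⁶ satisfies (p(ξ)/i) v = (ξ₀ - ‖ξ'‖_ε) v. -/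
set_option maxHeartbeats 1600000 in
theorem partially_anisotropic_eigenvector_extraordinary (a b ξ₀ : ℝ) (ha : 0 < a)
    (hb : 0 < b) (ξ' : Fin 3 → ℝ) (hξ : ξ' ≠ 0) :
    let nε := Real.sqrt (b * ξ' 0 ^ 2 + a * ξ' 1 ^ 2 + a * ξ' 2 ^ 2)
    let tξ : Fin 3 → ℝ := fun i => ξ' i / nε
    let p := Matrix.fromBlocks
      (ξ₀ • (1 : Matrix (Fin 3) (Fin 3) ℝ)) (-curlMatrix ξ')
      (curlMatrix ξ' * Matrix.diagonal ![a, b, b])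
      (ξ₀ • (1 : Matrix (Fin 3) (Fin 3) ℝ))
    let v : Fin 3 ⊕ Fin 3 → ℝ := Sum.elim
      ![tξ 1 ^ 2 + tξ 2 ^ 2, -(tξ 0 * tξ 1), -(tξ 0 * tξ 2)]
      ![0, -(tξ 2), tξ 1]
    p.mulVec v = (ξ₀ - nε) • v := by
  obtain ⟨x, y, z, rfl⟩ : ∃ x y z, ξ' = ![x, y, z] :=
    ⟨ξ' 0, ξ' 1, ξ' 2, by funext i; fin_cases i <;> rfl⟩
  intro nε tξ p v
  have hQ : 0 < b * x ^ 2 + a * y ^ 2 + a * z ^ 2 := by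
    rcases Function.ne_iff.1 hξ with ⟨i, hi⟩
    fin_cases i <;> simp at hi <;> positivity
  have hne : nε = Real.sqrt (b * x ^ 2 + a * y ^ 2 + a * z ^ 2) := by
    simp [nε]
  have hn : 0 < nε := by rw [hne]; exact Real.sqrt_pos.2 hQ
  have hn2 : nε ^ 2 = b * x ^ 2 + a * y ^ 2 + a * z ^ 2 := by
    rw [hne]; exact Real.sq_sqrt hQ.le
  have hn0 : nε ≠ 0 := hn.ne'
  clear_value nε
  funext w
  rcases w with i | i <;> fin_cases i <;>
    simp [p, v, tξ, Matrix.mulVec, Matrix.fromBlocks, curlMatrix, Matrix.diagonal_apply,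
      Matrix.vecMul_diagonal, Matrix.vecHead, Matrix.vecTail,
      Matrix.mul_apply, dotProduct, Fin.sum_univ_three, Matrix.one_apply] <;>
    field_simp
  any_goals ring
  any_goals linear_combination (-z) * hn2
  all_goals linear_combination y * hn2
end
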